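/- As x → ∞, ∑_{n ≤ x} Λ(n)/n = log x + O(1); that is, there exists a constant C > 0 such that for all real x ≥ 2, |∑_{n ≤ x} Λ(n)/n − log x| ≤ C. -/

import Mathlib

open ArithmeticFunction

namespace MertensProofAux

open Finset

noncomputable def T (N : ℕ) : ℝ := ∑ m ∈ Icc 1 N, Real.log m

lemma card_dvd_Icc (N d : ℕ) : ((Icc 1 N).filter (d ∣ ·)).card = N / d := by
  rw [← Nat.card_multiples' N d]
  congr 1
  ext k
  simp only [mem_filter, mem_Icc, mem_range, Nat.lt_succ_iff]
  constructor
  · rintro ⟨⟨h1, h2⟩, h3⟩; exact ⟨h2, by omega, h3⟩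
  · rintro ⟨h1, h2, h3⟩; exact ⟨⟨by omega, h1⟩, h3⟩

lemma T_eq (N : ℕ) : T N = ∑ d ∈ Icc 1 N, Λ d * (N / d : ℕ) := by
  have h1 : T N = ∑ m ∈ Icc 1 N, ∑ d ∈ m.divisors, Λ d := by
    exact Finset.sum_congr rfl fun m hm => (vonMangoldt_sum).symm
  rw [h1]
  have h2 : ∀ m ∈ Icc 1 N, ∑ d ∈ m.divisors, Λ d
      = ∑ d ∈ (Icc 1 N).filter (· ∣ m), Λ d := by
    intro m hm
    simp only [mem_Icc] at hm
    congr 1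
    ext d
    simp only [Nat.mem_divisors, mem_filter, mem_Icc]
    constructor
    · rintro ⟨h, _⟩
      have hd1 : 1 ≤ d := Nat.one_le_iff_ne_zero.2 (by rintro rfl; have := Nat.eq_zero_of_zero_dvd h; omega)
      exact ⟨⟨hd1, le_trans (Nat.le_of_dvd (by omega) h) hm.2⟩, h⟩
    · rintro ⟨_, h⟩; exact ⟨h, by omega⟩
  rw [Finset.sum_congr rfl h2]
  simp_rw [Finset.sum_filter]
  rw [Finset.sum_comm]
  refine Finset.sum_congr rfl fun d hd => ?_
  rw [← Finset.sum_filter]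
  have : ((Icc 1 N).filter (fun m => d ∣ m)) = ((Icc 1 N).filter (d ∣ ·)) := rfl
  rw [Finset.sum_const, this, card_dvd_Icc, nsmul_eq_mul, mul_comm]


lemma T_le (N : ℕ) : T N ≤ N * Real.log N := by
  unfold T
  calc ∑ m ∈ Icc 1 N, Real.log m ≤ ∑ m ∈ Icc 1 N, Real.log N := by
        refine sum_le_sum fun m hm => ?_
        simp only [mem_Icc] at hm
        exact Real.log_le_log (by exact_mod_cast hm.1) (by exact_mod_cast hm.2)
    _ = N * Real.log N := by rw [Finset.sum_const, Nat.card_Icc]; simp [nsmul_eq_mul]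

lemma T_eq_log_factorial (N : ℕ) : T N = Real.log (Nat.factorial N : ℝ) := by
  unfold T
  rw [← Real.log_prod (fun m hm => by simp only [mem_Icc] at hm; exact Nat.cast_ne_zero.2 (by omega))]
  congr 1
  rw [show Icc 1 N = Ico 1 (N+1) by rfl, ← Nat.cast_prod]
  norm_cast
  exact Finset.prod_Ico_id_eq_factorial N

lemma le_T (N : ℕ) : N * Real.log N - N ≤ T N := by
  rcases Nat.eq_zero_or_pos N with rfl | hN
  · simp [T]
  have key : (N : ℝ) ^ N ≤ Real.exp N * (Nat.factorial N : ℝ) := by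
    have h1 : (N : ℝ) ^ N / (Nat.factorial N : ℝ) ≤ Real.exp N := by
      have := Real.sum_le_exp_of_nonneg (x := (N:ℝ)) (by positivity) (N + 1)
      refine le_trans ?_ this
      exact Finset.single_le_sum (f := fun i => (N:ℝ)^i / (Nat.factorial i : ℝ))
        (fun i _ => by positivity) (by simp)
    rw [div_le_iff₀ (by positivity)] at h1
    linarith
  have h2 := Real.log_le_log (by positivity) key
  rw [Real.log_pow, Real.log_mul (Real.exp_ne_zero _) (by positivity), Real.log_exp] at h2
  rw [T_eq_log_factorial]
  push_cast
  linarith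

noncomputable def psi (N : ℕ) : ℝ := ∑ n ∈ Icc 1 N, Λ n


lemma psi_mono {a b : ℕ} (h : a ≤ b) : psi a ≤ psi b := by
  unfold psi
  refine Finset.sum_le_sum_of_subset_of_nonneg (Icc_subset_Icc_right h)
    (fun i _ _ => vonMangoldt_nonneg)

lemma psi_nonneg (N : ℕ) : 0 ≤ psi N := by
  unfold psi; exact Finset.sum_nonneg fun i _ => vonMangoldt_nonneg

lemma psi_rec (N : ℕ) (hN : 2 ≤ N) : psi N ≤ psi (N / 2) + (T N - 2 * T (N / 2)) := by
  set M := N / 2 with hM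
  have hMN : M ≤ N := Nat.div_le_self _ _
  have hTM : T M = ∑ d ∈ Icc 1 N, Λ d * (M / d : ℕ) := by
    rw [T_eq]
    refine Finset.sum_subset (Icc_subset_Icc_right hMN) fun d hd hd' => ?_
    simp only [mem_Icc] at hd hd'
    have : M / d = 0 := Nat.div_eq_of_lt (by omega)
    rw [this]; simp
  have key : T N - 2 * T M = ∑ d ∈ Icc 1 N, Λ d * (((N / d : ℕ) : ℝ) - 2 * ((M / d : ℕ) : ℝ)) := by
    rw [T_eq, hTM, Finset.mul_sum, ← Finset.sum_sub_distrib]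
    refine Finset.sum_congr rfl fun d hd => ?_
    ring
  rw [key]
  have split : psi N = psi M + ∑ d ∈ Ioc M N, Λ d := by
    unfold psi
    rw [← Finset.sum_union]
    · congr 1
      ext d; simp only [mem_union, mem_Icc, mem_Ioc]; omega
    · rw [Finset.disjoint_left]; intro d hd hd'
      simp only [mem_Icc] at hd; simp only [mem_Ioc] at hd'; omega
  rw [split]
  have h1 : ∑ d ∈ Ioc M N, Λ d ≤ ∑ d ∈ Ioc M N, Λ d * (((N / d : ℕ) : ℝ) - 2 * ((M / d : ℕ) : ℝ)) := by
    refine Finset.sum_le_sum fun d hd => ?_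
    simp only [mem_Ioc] at hd
    have hz : M / d = 0 := Nat.div_eq_of_lt hd.1
    have ho : 1 ≤ N / d := Nat.one_le_div_iff (by omega) |>.2 hd.2
    rw [hz]
    have : (1:ℝ) ≤ ((N / d : ℕ) : ℝ) - 2 * ((0 : ℕ) : ℝ) := by
      push_cast; simp; exact_mod_cast ho
    nlinarith [vonMangoldt_nonneg (n := d)]
  have h2 : ∑ d ∈ Ioc M N, Λ d * (((N / d : ℕ) : ℝ) - 2 * ((M / d : ℕ) : ℝ))
      ≤ ∑ d ∈ Icc 1 N, Λ d * (((N / d : ℕ) : ℝ) - 2 * ((M / d : ℕ) : ℝ)) := by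
    refine Finset.sum_le_sum_of_subset_of_nonneg ?_ fun d hd _ => ?_
    · intro d hd; simp only [mem_Ioc] at hd; simp only [mem_Icc]
      constructor <;> omega
    · have hge : 2 * (M / d) ≤ N / d := by
        have : M / d = N / d / 2 := by
          rw [hM, Nat.div_div_eq_div_mul, Nat.div_div_eq_div_mul, mul_comm]
        omega
      have : (0:ℝ) ≤ ((N / d : ℕ) : ℝ) - 2 * ((M / d : ℕ) : ℝ) := by
        have := (Nat.cast_le (α := ℝ)).2 hge
        push_cast at this ⊢
        linarith
      exact mul_nonneg vonMangoldt_nonneg this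
  linarith

lemma Tdiff (N : ℕ) (hN : 2 ≤ N) : T N - 2 * T (N / 2) ≤ 4 * N := by
  set M := N / 2 with hM
  have hM1 : 1 ≤ M := by omega
  have hm1 : (1:ℝ) ≤ (M:ℝ) := by exact_mod_cast hM1
  have hNr : (2:ℝ) ≤ (N:ℝ) := by exact_mod_cast hN
  have h2mL : (N:ℝ) - 1 ≤ 2 * (M:ℝ) := by
    have : N ≤ 2 * M + 1 := by omega
    have := (Nat.cast_le (α := ℝ)).2 this; push_cast at this; linarith
  have h2mU : 2 * (M:ℝ) ≤ (N:ℝ) := by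
    have : 2 * M ≤ N := by omega
    exact_mod_cast this
  have h1 := T_le N
  have h2 := le_T M
  have hlog2m : Real.log (2 * (M:ℝ)) = Real.log 2 + Real.log (M:ℝ) :=
    Real.log_mul two_ne_zero (by positivity)
  have hL2m0 : 0 ≤ Real.log (2 * (M:ℝ)) := Real.log_nonneg (by linarith)
  have f3 : Real.log ((N:ℝ) - 1) ≤ Real.log (2 * (M:ℝ)) :=
    Real.log_le_log (by linarith) h2mL
  have f4 : ((N:ℝ) - 1) * (Real.log (N:ℝ) - Real.log ((N:ℝ) - 1)) ≤ 1 := by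
    have hpos : (0:ℝ) < (N:ℝ) - 1 := by linarith
    have hq : Real.log ((N:ℝ) / ((N:ℝ) - 1)) ≤ (N:ℝ) / ((N:ℝ) - 1) - 1 :=
      Real.log_le_sub_one_of_pos (by positivity)
    rw [Real.log_div (by linarith) (by linarith)] at hq
    have : ((N:ℝ) - 1) * ((N:ℝ) / ((N:ℝ) - 1) - 1) = 1 := by field_simp; ring
    nlinarith
  have f5 : Real.log (N:ℝ) ≤ (N:ℝ) - 1 := Real.log_le_sub_one_of_pos (by linarith)
  have f6 : Real.log 2 ≤ 0.7 := by
    have := Real.log_two_lt_d9; linarith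
  have f7 : (0:ℝ) ≤ Real.log 2 := Real.log_nonneg (by norm_num)
  have fa : ((N:ℝ) - 1) * Real.log (2 * (M:ℝ)) ≤ 2 * (M:ℝ) * Real.log (2 * (M:ℝ)) :=
    mul_le_mul_of_nonneg_right h2mL hL2m0
  have fb : ((N:ℝ) - 1) * Real.log ((N:ℝ) - 1) ≤ ((N:ℝ) - 1) * Real.log (2 * (M:ℝ)) :=
    mul_le_mul_of_nonneg_left f3 (by linarith)
  have fc : 2 * (M:ℝ) * Real.log 2 ≤ (N:ℝ) * Real.log 2 :=
    mul_le_mul_of_nonneg_right h2mU f7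
  have fL0 : 0 ≤ Real.log (N:ℝ) := Real.log_nonneg (by linarith)
  nlinarith [h1, h2, hlog2m, fa, fb, fc, f4, f5, f6, fL0]

lemma psi_le (N : ℕ) : psi N ≤ 8 * N := by
  induction N using Nat.strong_induction_on with
  | _ N ih =>
    rcases lt_or_ge N 2 with h | h
    · interval_cases N
      · simp [psi]
      · simp [psi, vonMangoldt_apply_one]
    · have h1 := psi_rec N h
      have h2 := Tdiff N h
      have h3 := ih (N / 2) (by omega)
      have h4 : ((N / 2 : ℕ) : ℝ) ≤ (N : ℝ) / 2 := by
        have : 2 * (N / 2) ≤ N := by omega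
        have := (Nat.cast_le (α := ℝ)).2 this
        push_cast at this; linarith
      linarith

end MertensProofAux

open MertensProofAux Finset in
theorem sum_vonMangoldt_div_eq_log_add_bigO :
    ∃ C > 0, ∀ x : ℝ, 2 ≤ x →
      |(∑ n ∈ Finset.Icc 1 ⌊x⌋₊, (Λ n : ℝ) / n) - Real.log x| ≤ C := by
  refine ⟨8, by norm_num, fun x hx => ?_⟩
  set N := ⌊x⌋₊ with hN
  have hx0 : (0:ℝ) < x := by linarith
  have hN2 : 2 ≤ N := Nat.le_floor (by exact_mod_cast hx)
  have hNx : (N:ℝ) ≤ x := Nat.floor_le hx0.le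
  have hxN : x < N + 1 := Nat.lt_floor_add_one x
  have hNr : (2:ℝ) ≤ (N:ℝ) := by exact_mod_cast hN2
  set S := ∑ n ∈ Finset.Icc 1 N, (Λ n : ℝ) / n with hS
  have hxS : x * S = ∑ n ∈ Finset.Icc 1 N, Λ n * (x / n) := by
    rw [hS, Finset.mul_sum]
    exact Finset.sum_congr rfl fun n _ => by ring
  -- floor identity termwise
  have hterm : ∀ n ∈ Finset.Icc 1 N, (0:ℝ) ≤ Λ n * (x / n) - Λ n * ((N / n : ℕ) : ℝ)
      ∧ Λ n * (x / n) - Λ n * ((N / n : ℕ) : ℝ) ≤ Λ n := by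
    intro n hn
    simp only [Finset.mem_Icc] at hn
    have hn0 : (0:ℝ) < (n:ℝ) := by exact_mod_cast hn.1
    have hfl : ((N / n : ℕ) : ℝ) = ((⌊x / n⌋₊ : ℕ) : ℝ) := by
      rw [hN, ← Nat.floor_div_natCast x n]
    have hle : ((N / n : ℕ) : ℝ) ≤ x / n := by
      rw [hfl]; exact Nat.floor_le (by positivity)
    have hlt : x / n < ((N / n : ℕ) : ℝ) + 1 := by
      rw [hfl]; exact Nat.lt_floor_add_one _
    constructor
    · nlinarith [vonMangoldt_nonneg (n := n)]
    · nlinarith [vonMangoldt_nonneg (n := n)]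
  have hlow : T N ≤ x * S := by
    rw [hxS, T_eq]
    refine Finset.sum_le_sum fun n hn => ?_
    have := (hterm n hn).1; linarith
  have hhigh : x * S ≤ T N + psi N := by
    rw [hxS, T_eq]
    unfold psi
    rw [← Finset.sum_add_distrib]
    refine Finset.sum_le_sum fun n hn => ?_
    have := (hterm n hn).2; linarith
  have hpsi : psi N ≤ 8 * x := le_trans (psi_le N) (by nlinarith)
  have hTub : T N ≤ x * Real.log x := by
    refine le_trans (T_le N) ?_
    have hlog : Real.log (N:ℝ) ≤ Real.log x := Real.log_le_log (by linarith) hNx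
    have h0 : 0 ≤ Real.log (N:ℝ) := Real.log_nonneg (by linarith)
    nlinarith
  have hTlb : x * Real.log x - 3 * x ≤ T N := by
    have h1 := le_T N
    have hlogx1 : Real.log x ≤ x := le_trans (Real.log_le_sub_one_of_pos hx0) (by linarith)
    have hlogx0 : 0 ≤ Real.log x := Real.log_nonneg (by linarith)
    have hq : Real.log (x / N) ≤ x / N - 1 := Real.log_le_sub_one_of_pos (by positivity)
    rw [Real.log_div (by linarith) (by linarith)] at hq
    have hq2 : (N:ℝ) * (Real.log x - Real.log N) ≤ x - N := by
      have : (N:ℝ) * (x / N - 1) = x - N := by field_simp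
      nlinarith
    nlinarith
  -- conclude
  have hub : S ≤ Real.log x + 8 := by
    have : x * S ≤ x * (Real.log x + 8) := by nlinarith
    exact le_of_mul_le_mul_left this hx0
  have hlb : Real.log x - 3 ≤ S := by
    have : x * (Real.log x - 3) ≤ x * S := by nlinarith
    exact le_of_mul_le_mul_left this hx0
  rw [abs_le]
  constructor <;> linarith
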